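/- arXiv:1308.0217 — 5 statements merged into one kernel-verified Lean document; each statement's English description precedes it below -/
import Mathlib

section
/- Let R be a nonnegative measure on Ω, φ : Ω → X a measurable map into a measurable space X, and suppose the pushforward R_φ = φ_*R is σ-finite. Let γ : X → (0,1] be measurable such that the measure γ·R_φ is bounded. Then L¹(R) ⊆ L¹(γ(φ)·R), and for every f ∈ L¹(R) one has E_R(f | φ) = E_{γ(φ)·R}(f | φ) R-almost everywhere. -/
open MeasureTheory

/-- Auxiliary lemma: if the density is an `m`-measurable function with values in `[0,1]`
and the resulting measure is finite, the conditional expectations with respect to `R` and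
`R.withDensity` agree `R.withDensity`-a.e. -/
theorem condexp_withDensity_aux {Ω : Type*} {m m0 : MeasurableSpace Ω} (hm : m ≤ m0)
    (R : Measure Ω) [SigmaFinite (R.trim hm)]
    (nn : Ω → NNReal) (hnn : Measurable nn)
    (hnnm : StronglyMeasurable[m] (fun ω => (nn ω : ℝ)))
    (hnn_le : ∀ ω, ((nn ω : ENNReal)) ≤ 1)
    [IsFiniteMeasure (R.withDensity (fun ω => ((nn ω : ENNReal))))]
    (f : Ω → ℝ) (hf : Integrable f R) :
    (R[f|m]) =ᵐ[R.withDensity (fun ω => ((nn ω : ENNReal)))]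
      (R.withDensity (fun ω => ((nn ω : ENNReal))))[f|m] := by
  set R' := R.withDensity (fun ω => ((nn ω : ENNReal))) with hR'
  have hle : R' ≤ R := by
    have h1 : R.withDensity (fun ω => ((nn ω : ENNReal))) ≤ R.withDensity 1 :=
      withDensity_mono (Filter.Eventually.of_forall hnn_le)
    simpa [withDensity_one] using h1
  have hf' : Integrable f R' := hf.mono_measure hle
  haveI : SigmaFinite (R'.trim hm) := inferInstance
  set b : Ω → ℝ := fun ω => (nn ω : ℝ) with hb_def
  have hb_le : ∀ ω, ‖b ω‖ ≤ 1 := fun ω => by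
    rw [Real.norm_of_nonneg (nn ω).coe_nonneg]
    exact_mod_cast (by exact_mod_cast hnn_le ω : (nn ω : ENNReal) ≤ (1 : NNReal))
  have hbf : Integrable (b * f) R :=
    hf.bdd_mul (hnnm.mono hm).aestronglyMeasurable (Filter.Eventually.of_forall hb_le)
  refine ae_eq_condExp_of_forall_setIntegral_eq hm hf'
    (fun s _ _ => (integrable_condExp.mono_measure hle).integrableOn)
    (fun s hs _ => ?_)
    stronglyMeasurable_condExp.aestronglyMeasurable
  have hs0 : MeasurableSet s := hm s hs
  rw [hR', setIntegral_withDensity_eq_setIntegral_smul hnn _ hs0,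
    setIntegral_withDensity_eq_setIntegral_smul hnn _ hs0]
  have hsmul : ∀ (g : Ω → ℝ) (ω : Ω), nn ω • g ω = b ω * g ω := fun g ω => rfl
  simp_rw [hsmul]
  have h2 : R[b * f|m] =ᵐ[R] b * (R[f|m]) :=
    condExp_mul_of_stronglyMeasurable_left hnnm hbf hf
  have h3 : ∫ ω in s, b ω * (R[f|m]) ω ∂(R) = ∫ ω in s, (R[b * f|m]) ω ∂(R) :=
    setIntegral_congr_ae hs0 ((h2.symm).mono fun ω hω _ => hω)
  rw [h3, setIntegral_condExp hm hbf hs]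
  rfl

/-- If `R_φ = φ⁎R` is σ-finite and `γ : X → (0,1]` is measurable with `γ·R_φ` a bounded
measure, then `L¹(R) ⊆ L¹(γ(φ)·R)` and for `f ∈ L¹(R)`,
`E_R(f | φ) = E_{γ(φ)·R}(f | φ)` R-a.e. -/
theorem condexp_eq_condexp_withDensity
    {Ω X : Type*} [MeasurableSpace Ω] [MeasurableSpace X]
    (R : Measure Ω) (φ : Ω → X) (hφ : Measurable φ) [SigmaFinite (R.map φ)]
    (γ : X → ENNReal) (hγm : Measurable γ) (hγ : ∀ x, 0 < γ x ∧ γ x ≤ 1)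
    (hbd : IsFiniteMeasure ((R.map φ).withDensity γ))
    (f : Ω → ℝ) (hf : Integrable f R) :
    Integrable f (R.withDensity (γ ∘ φ)) ∧
      R[f | MeasurableSpace.comap φ inferInstance]
        =ᵐ[R] (R.withDensity (γ ∘ φ))[f | MeasurableSpace.comap φ inferInstance] := by
  have hm : MeasurableSpace.comap φ inferInstance ≤ ‹MeasurableSpace Ω› := hφ.comap_le
  have hγ_ne_top : ∀ x, γ x ≠ ⊤ := fun x =>
    ne_top_of_le_ne_top ENNReal.one_ne_top (hγ x).2
  have hcoe : (γ ∘ φ) = fun ω => (((γ (φ ω)).toNNReal : ENNReal)) := by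
    funext ω
    simp [ENNReal.coe_toNNReal (hγ_ne_top (φ ω))]
  have hnn_meas : Measurable (fun ω => (γ (φ ω)).toNNReal) := (hγm.comp hφ).ennreal_toNNReal
  -- `R.withDensity (γ ∘ φ) ≤ R`
  have hle : R.withDensity (γ ∘ φ) ≤ R := by
    have h1 : R.withDensity (γ ∘ φ) ≤ R.withDensity 1 :=
      withDensity_mono (Filter.Eventually.of_forall fun ω => (hγ (φ ω)).2)
    simpa [withDensity_one] using h1
  have hf' : Integrable f (R.withDensity (γ ∘ φ)) := hf.mono_measure hle
  -- `R.withDensity (γ ∘ φ)` is a finite measure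
  have hfin : IsFiniteMeasure (R.withDensity (γ ∘ φ)) := by
    constructor
    have h1 : (R.withDensity (γ ∘ φ)) Set.univ = ∫⁻ ω, γ (φ ω) ∂(R) := by
      rw [withDensity_apply _ MeasurableSet.univ, Measure.restrict_univ]; rfl
    have h2 : ((R.map φ).withDensity γ) Set.univ = ∫⁻ x, γ x ∂(R.map φ) := by
      rw [withDensity_apply _ MeasurableSet.univ, Measure.restrict_univ]
    rw [h1, ← lintegral_map hγm hφ, ← h2]
    exact measure_lt_top _ _
  -- `R ≪ R.withDensity (γ ∘ φ)` since `γ > 0`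
  have hac : R ≪ R.withDensity (γ ∘ φ) := by
    refine Measure.AbsolutelyContinuous.mk fun s hs h0 => ?_
    rw [withDensity_apply _ hs, lintegral_eq_zero_iff (hγm.comp hφ)] at h0
    have h2 := ae_iff.mp h0
    have huniv : {a | ¬ (γ ∘ φ) a = (0 : Ω → ENNReal) a} = Set.univ := by
      ext a
      simp [(hγ (φ a)).1.ne']
    rw [huniv, Measure.restrict_apply_univ] at h2
    exact h2
  -- σ-finiteness of the trimmed measure
  haveI hsf : SigmaFinite (R.trim hm) := by
    refine ⟨⟨⟨fun n => φ ⁻¹' spanningSets (R.map φ) n, fun _ => trivial, fun n => ?_, ?_⟩⟩⟩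
    · have hmeas : MeasurableSet[MeasurableSpace.comap φ inferInstance]
          (φ ⁻¹' spanningSets (R.map φ) n) :=
        ⟨_, measurableSet_spanningSets _ n, rfl⟩
      rw [trim_measurableSet_eq hm hmeas,
        ← Measure.map_apply hφ (measurableSet_spanningSets _ n)]
      exact measure_spanningSets_lt_top _ n
    · rw [← Set.preimage_iUnion, iUnion_spanningSets, Set.preimage_univ]
  -- `m`-measurability of the real-valued density
  have hφm : Measurable[MeasurableSpace.comap φ inferInstance] φ :=
    Measurable.of_comap_le le_rfl
  have hnnm : StronglyMeasurable[MeasurableSpace.comap φ inferInstance]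
      (fun ω => (((γ (φ ω)).toNNReal : ℝ))) := by
    have : Measurable[MeasurableSpace.comap φ inferInstance]
        (fun ω => (γ (φ ω)).toReal) := hγm.ennreal_toReal.comp hφm
    exact this.stronglyMeasurable
  haveI hfin' : IsFiniteMeasure
      (R.withDensity (fun ω => (((γ (φ ω)).toNNReal : ENNReal)))) := by
    rw [← hcoe]; exact hfin
  have key := condexp_withDensity_aux hm R (fun ω => (γ (φ ω)).toNNReal) hnn_meas hnnm
    (fun ω => by rw [ENNReal.coe_toNNReal (hγ_ne_top (φ ω))]; exact (hγ (φ ω)).2) f hf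
  rw [← hcoe] at key
  exact ⟨hf', key.filter_mono hac.ae_le⟩
end

section
/- Let R, Q be nonnegative measures on a measurable space Ω and φ : Ω → X a measurable map into a Polish space X. Suppose Q ≺ R and that both pushforwards R_φ and Q_φ are σ-finite. Then E_R(dQ/dR | φ) > 0 Q-almost everywhere, and for every bounded measurable function f on Ω, E_Q(f | φ) = E_R((dQ/dR)·f | φ) / E_R(dQ/dR | φ), Q-almost everywhere. -/
open MeasureTheory

theorem condexp_abs_continuous_formula_aux
    {Ω : Type*} (m : MeasurableSpace Ω) [mΩ : MeasurableSpace Ω] (hm : m ≤ mΩ)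
    (Rγ Qγ Q : Measure Ω) [IsFiniteMeasure Rγ] [IsFiniteMeasure Qγ]
    (θ : Ω → ENNReal) (hθm : Measurable θ) (hθfin : ∀ ω, θ ω ≠ ⊤)
    (hQR : Qγ = Rγ.withDensity θ) (hQac : Q ≪ Qγ) :
    (∀ᵐ ω ∂Q, 0 < (Rγ[fun ω' => (θ ω').toReal | m]) ω) ∧
    ∀ f : Ω → ℝ, Measurable f → (∃ C : ℝ, ∀ ω, |f ω| ≤ C) →
      Qγ[f | m] =ᵐ[Q] fun ω =>
        (Rγ[fun ω' => (θ ω').toReal * f ω' | m]) ω /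
        (Rγ[fun ω' => (θ ω').toReal | m]) ω := by
  have hQγac : Qγ ≪ Rγ := hQR ▸ withDensity_absolutelyContinuous Rγ θ
  have hQRγ : Q ≪ Rγ := hQac.trans hQγac
  haveI : SigmaFinite (Rγ.trim hm) := inferInstance
  haveI : SigmaFinite (Qγ.trim hm) := inferInstance
  -- integrability of θ.toReal w.r.t. Rγ
  have hlint : ∫⁻ ω, θ ω ∂ Rγ ≠ ⊤ := by
    have h : ∫⁻ ω, θ ω ∂ Rγ = Qγ Set.univ := by
      rw [hQR, withDensity_apply _ MeasurableSet.univ, setLIntegral_univ]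
    rw [h]; exact measure_ne_top _ _
  have hθint : Integrable (fun ω => (θ ω).toReal) Rγ :=
    integrable_toReal_of_lintegral_ne_top hθm.aemeasurable hlint
  set g := Rγ[fun ω' => (θ ω').toReal | m] with hgdef
  have hg_meas : StronglyMeasurable[m] g := stronglyMeasurable_condExp
  -- positivity
  have hgpos : ∀ᵐ ω ∂Q, 0 < g ω := by
    set A : Set Ω := g ⁻¹' Set.Iic 0 with hAdef
    have hA_m : MeasurableSet[m] A := hg_meas.measurable measurableSet_Iic
    have hA : MeasurableSet A := hm _ hA_m
    have h1 : ∫ ω in A, (θ ω).toReal ∂ Rγ = ∫ ω in A, g ω ∂ Rγ :=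
      (setIntegral_condExp hm hθint hA_m).symm
    have h2 : ∫ ω in A, g ω ∂ Rγ ≤ 0 :=
      setIntegral_nonpos hA fun ω hω => hω
    have h3 : (0:ℝ) ≤ ∫ ω in A, (θ ω).toReal ∂ Rγ :=
      setIntegral_nonneg hA fun ω _ => ENNReal.toReal_nonneg
    have h4 : ∫ ω in A, (θ ω).toReal ∂ Rγ = 0 := le_antisymm (h1 ▸ h2) h3
    have h5 : ∫ ω in A, (θ ω).toReal ∂ Rγ = (∫⁻ ω in A, θ ω ∂ Rγ).toReal :=
      integral_toReal hθm.aemeasurable.restrict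
        (Filter.Eventually.of_forall fun ω => (hθfin ω).lt_top)
    have h6 : ∫⁻ ω in A, θ ω ∂ Rγ ≠ ⊤ :=
      fun h => hlint (top_le_iff.mp (h ▸ setLIntegral_le_lintegral A θ))
    have h7 : ∫⁻ ω in A, θ ω ∂ Rγ = 0 :=
      ((ENNReal.toReal_eq_zero_iff _).mp (h5 ▸ h4)).resolve_right h6
    have hQA : Q A = 0 := hQac (by rw [hQR, withDensity_apply _ hA]; exact h7)
    have hset : {ω | ¬ 0 < g ω} = A := by
      ext ω; simp [hAdef, not_lt]
    rw [ae_iff, hset]; exact hQA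
  refine ⟨hgpos, fun f hfm hCex => ?_⟩
  obtain ⟨C₀, hC₀⟩ := hCex
  set C : ℝ := max C₀ 0 with hCdef
  have hCnn : 0 ≤ C := le_max_right _ _
  have hC : ∀ ω, |f ω| ≤ C := fun ω => (hC₀ ω).trans (le_max_left _ _)
  -- transfer lemma for integrals
  have key : ∀ (s : Set Ω), MeasurableSet s → ∀ h : Ω → ℝ,
      ∫ ω in s, h ω ∂Qγ = ∫ ω in s, (θ ω).toReal * h ω ∂ Rγ := by
    intro s hs h
    have hθ' : (fun ω => ((θ ω).toNNReal : ENNReal)) = θ :=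
      funext fun ω => ENNReal.coe_toNNReal (hθfin ω)
    rw [hQR, ← hθ', restrict_withDensity hs,
      integral_withDensity_eq_integral_smul hθm.ennreal_toNNReal h]
    rfl
  set u := Qγ[f | m] with hudef
  have hu_meas : StronglyMeasurable[m] u := stronglyMeasurable_condExp
  set u' : Ω → ℝ := fun ω => max (min (u ω) C) (-C) with hu'def
  have hcont : Continuous (fun y : ℝ => max (min y C) (-C)) :=
    (continuous_id.min continuous_const).max continuous_const
  have hu'_sm : StronglyMeasurable[m] u' := hcont.comp_stronglyMeasurable hu_meas
  have hu'_bdd : ∀ ω, |u' ω| ≤ C := fun ω =>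
    abs_le.mpr ⟨le_max_right _ _, max_le (min_le_right _ _) (neg_le_self hCnn)⟩
  have hf_int : Integrable f Qγ :=
    (integrable_const C).mono' hfm.aestronglyMeasurable
      (Filter.Eventually.of_forall fun ω => by
        simpa [Real.norm_eq_abs] using hC ω)
  have hθf_int : Integrable (fun ω => (θ ω).toReal * f ω) Rγ := by
    have h := hθint.bdd_mul hfm.aestronglyMeasurable
      (c := C) (Filter.Eventually.of_forall fun ω => by simpa [Real.norm_eq_abs] using hC ω)
    exact h.congr (Filter.Eventually.of_forall fun ω => mul_comm _ _)
  have hu'θ_int : Integrable (u' * fun ω' => (θ ω').toReal) Rγ :=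
    hθint.bdd_mul ((hu'_sm.mono hm).aestronglyMeasurable)
      (c := C) (Filter.Eventually.of_forall fun ω => by simpa [Real.norm_eq_abs] using hu'_bdd ω)
  have hu'g_int : Integrable (fun ω => u' ω * g ω) Rγ :=
    integrable_condExp.bdd_mul ((hu'_sm.mono hm).aestronglyMeasurable)
      (c := C) (Filter.Eventually.of_forall fun ω => by simpa [Real.norm_eq_abs] using hu'_bdd ω)
  -- u' equals u a.e. Qγ
  have hu'_eq : u' =ᵐ[Qγ] u := by
    have hb : ∀ᵐ ω ∂Qγ, |f ω| ≤ (C.toNNReal : ℝ) :=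
      Filter.Eventually.of_forall fun ω => by
        rw [Real.coe_toNNReal _ hCnn]; exact hC ω
    have hub := ae_bdd_condExp_of_ae_bdd (m := m) hb
    refine hub.mono fun ω hω => ?_
    rw [Real.coe_toNNReal _ hCnn] at hω
    rw [hu'def]
    have h1 : u ω ≤ C := (abs_le.mp hω).2
    have h2 : -C ≤ u ω := (abs_le.mp hω).1
    simp only [min_eq_left h1, max_eq_left h2]
  -- pull-out property
  have hpull : Rγ[u' * (fun ω' => (θ ω').toReal) | m] =ᵐ[Rγ] u' * g :=
    condExp_stronglyMeasurable_mul_of_bound hm hu'_sm hθint C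
      (Filter.Eventually.of_forall fun ω => by
        simpa [Real.norm_eq_abs] using hu'_bdd ω)
  -- the set-integral identity
  have hsetint : ∀ s : Set Ω, MeasurableSet[m] s → Rγ s < ⊤ →
      ∫ ω in s, u' ω * g ω ∂ Rγ = ∫ ω in s, (θ ω).toReal * f ω ∂ Rγ := by
    intro s hs _
    have hsΩ : MeasurableSet s := hm _ hs
    calc ∫ ω in s, u' ω * g ω ∂ Rγ
        = ∫ ω in s, (Rγ[u' * (fun ω' => (θ ω').toReal) | m]) ω ∂ Rγ :=
          integral_congr_ae (ae_restrict_of_ae hpull.symm)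
      _ = ∫ ω in s, (u' * fun ω' => (θ ω').toReal) ω ∂ Rγ :=
          setIntegral_condExp hm hu'θ_int hs
      _ = ∫ ω in s, (θ ω).toReal * u' ω ∂ Rγ :=
          integral_congr_ae (ae_restrict_of_ae
            (Filter.Eventually.of_forall fun ω => mul_comm _ _))
      _ = ∫ ω in s, u' ω ∂Qγ := (key s hsΩ u').symm
      _ = ∫ ω in s, u ω ∂Qγ :=
          integral_congr_ae (ae_restrict_of_ae hu'_eq)
      _ = ∫ ω in s, f ω ∂Qγ := setIntegral_condExp hm hf_int hs
      _ = ∫ ω in s, (θ ω).toReal * f ω ∂ Rγ := key s hsΩ f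
  have h_main : (fun ω => u' ω * g ω)
      =ᵐ[Rγ] Rγ[fun ω' => (θ ω').toReal * f ω' | m] :=
    ae_eq_condExp_of_forall_setIntegral_eq hm hθf_int
      (fun s _ _ => hu'g_int.integrableOn) hsetint
      ((hu'_sm.mul hg_meas).aestronglyMeasurable)
  filter_upwards [hgpos, hQRγ.ae_eq h_main, hQac.ae_eq hu'_eq] with ω h1 h2 h3
  rw [← h3, ← h2, mul_div_cancel_right₀ _ h1.ne']

/-- Theorem (Léonard, Thm 2.5 (d)). Let `Q ≺ R` with density `θ = dQ/dR`, `φ : Ω → X`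
measurable into a Polish space, with `R_φ` and `Q_φ` σ-finite, and let `γ : X → (0,1]`
(a.e.) be measurable making `γ(φ)·R` and `γ(φ)·Q` bounded, so that the extended
conditional expectations are `E_R(·|φ) := E_{γ(φ)R}(·|φ)` and `E_Q(·|φ) := E_{γ(φ)Q}(·|φ)`.
Then `E_R(dQ/dR | φ) > 0` Q-a.e. and, for every bounded measurable `f`,
`E_Q(f|φ) = E_R((dQ/dR)·f | φ) / E_R(dQ/dR | φ)` Q-a.e. -/
theorem condexp_abs_continuous_formula
    {Ω X : Type*} [MeasurableSpace Ω] [MeasurableSpace X]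
    [TopologicalSpace X] [PolishSpace X] [BorelSpace X]
    (R Q : Measure Ω) (φ : Ω → X) (hφ : Measurable φ)
    (θ : Ω → ENNReal) (hθm : Measurable θ) (hθfin : ∀ ω, θ ω ≠ ⊤)
    (hθ : ∀ f : Ω → ENNReal, Measurable f → ∫⁻ ω, f ω ∂Q = ∫⁻ ω, f ω * θ ω ∂ R)
    [SigmaFinite (R.map φ)] [SigmaFinite (Q.map φ)]
    (γ : X → ENNReal) (hγm : Measurable γ)
    (hγpos : ∀ᵐ x ∂(R.map φ + Q.map φ), 0 < γ x ∧ γ x ≤ 1)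
    (hRγ : IsFiniteMeasure (R.withDensity (γ ∘ φ)))
    (hQγ : IsFiniteMeasure (Q.withDensity (γ ∘ φ))) :
    (∀ᵐ ω ∂Q,
      0 < ((R.withDensity (γ ∘ φ))[fun ω' => (θ ω').toReal |
            MeasurableSpace.comap φ inferInstance]) ω) ∧
    ∀ f : Ω → ℝ, Measurable f → (∃ C : ℝ, ∀ ω, |f ω| ≤ C) →
      (Q.withDensity (γ ∘ φ))[f | MeasurableSpace.comap φ inferInstance]
        =ᵐ[Q] fun ω =>
          ((R.withDensity (γ ∘ φ))[fun ω' => (θ ω').toReal * f ω' |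
              MeasurableSpace.comap φ inferInstance]) ω /
          ((R.withDensity (γ ∘ φ))[fun ω' => (θ ω').toReal |
              MeasurableSpace.comap φ inferInstance]) ω := by
  haveI := hRγ; haveI := hQγ
  have hγφm : Measurable (γ ∘ φ) := hγm.comp hφ
  have hQR : Q.withDensity (γ ∘ φ) = (R.withDensity (γ ∘ φ)).withDensity θ := by
    ext s hs
    rw [withDensity_apply _ hs, withDensity_apply _ hs,
      restrict_withDensity hs,
      lintegral_withDensity_eq_lintegral_mul _ hγφm hθm,
      ← lintegral_indicator hs, ← lintegral_indicator hs,
      hθ (s.indicator (γ ∘ φ)) (hγφm.indicator hs)]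
    congr 1
    ext ω
    by_cases hω : ω ∈ s <;> simp [hω]
  have hQpos : ∀ᵐ ω ∂Q, 0 < γ (φ ω) := by
    have h1 : ∀ᵐ x ∂(Q.map φ), 0 < γ x ∧ γ x ≤ 1 :=
      hγpos.filter_mono (ae_mono (Measure.le_add_left le_rfl))
    exact (ae_of_ae_map hφ.aemeasurable h1).mono fun ω h => h.1
  have hQac : Q ≪ Q.withDensity (γ ∘ φ) :=
    withDensity_absolutelyContinuous' hγφm.aemeasurable
      (hQpos.mono fun ω h => h.ne')
  exact condexp_abs_continuous_formula_aux
    (MeasurableSpace.comap φ inferInstance) hφ.comap_le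
    (R.withDensity (γ ∘ φ)) (Q.withDensity (γ ∘ φ)) Q
    θ hθm hθfin hQR hQac
end

section
/- Let R be a σ-finite nonnegative measure on Ω and P a probability measure on Ω. Let W, W' : Ω → [0,∞) be measurable functions with z_W := ∫ e^{−W} dR < ∞ and z_{W'} := ∫ e^{−W'} dR < ∞, and suppose ∫ W dP < ∞ and ∫ W' dP < ∞. Then H(P | R_W) − ∫ W dP − log z_W = H(P | R_{W'}) − ∫ W' dP − log z_{W'} in (−∞,∞], where R_W := z_W^{−1} e^{−W}·R and R_{W'} := z_{W'}^{−1} e^{−W'}·R are the associated probability measures. -/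
open MeasureTheory
open scoped Classical

/-- Relative entropy `H(P|S) = ∫ log(dP/dS) dP ∈ (-∞,∞]` between (probability) measures,
`+∞` if `P` is not absolutely continuous w.r.t. `S` or `log(dP/dS)` is not `P`-integrable. -/
noncomputable def relEnt {Ω : Type*} [MeasurableSpace Ω] (P S : Measure Ω) : EReal :=
  if P ≪ S ∧ Integrable (llr P S) P then ((∫ ω, llr P S ω ∂P : ℝ) : EReal) else ⊤

/-- The normalizing constant `z_W = ∫ e^{-W} dR`. -/
noncomputable def zW {Ω : Type*} [MeasurableSpace Ω] (R : Measure Ω) (W : Ω → ℝ) : ENNReal :=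
  lintegral R (fun ω => ENNReal.ofReal (Real.exp (-W ω)))

/-- The tilted probability measure `R_W = z_W⁻¹ e^{-W}·R`. -/
noncomputable def tiltedPM {Ω : Type*} [MeasurableSpace Ω] (R : Measure Ω) (W : Ω → ℝ) :
    Measure Ω :=
  (zW R W)⁻¹ • R.withDensity (fun ω => ENNReal.ofReal (Real.exp (-W ω)))

/-- Relative entropy with respect to a possibly unbounded (σ-finite) reference measure `R`,
defined through the tilting function `W` by `H(P|R) := H(P|R_W) - ∫ W dP - log z_W`. -/
noncomputable def relEntSF {Ω : Type*} [MeasurableSpace Ω] (R : Measure Ω) (W : Ω → ℝ)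
    (P : Measure Ω) : EReal :=
  relEnt P (tiltedPM R W) - ((∫ ω, W ω ∂P : ℝ) : EReal)
    - ((Real.log (zW R W).toReal : ℝ) : EReal)

lemma integrable_exp_negW {Ω : Type*} [MeasurableSpace Ω] (R : Measure Ω) (W : Ω → ℝ)
    (hWm : Measurable W) (hzW : zW R W ≠ ⊤) :
    Integrable (fun ω ↦ Real.exp (-W ω)) R := by
  refine ⟨(hWm.neg.exp).aestronglyMeasurable, ?_⟩
  rw [hasFiniteIntegral_iff_ofReal (Filter.Eventually.of_forall fun ω ↦ (Real.exp_pos _).le)]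
  exact Ne.lt_top hzW

lemma integral_exp_negW {Ω : Type*} [MeasurableSpace Ω] (R : Measure Ω) (W : Ω → ℝ)
    (hWm : Measurable W) :
    ∫ ω, Real.exp (-W ω) ∂ R = (zW R W).toReal := by
  rw [integral_eq_lintegral_of_nonneg_ae (Filter.Eventually.of_forall fun ω ↦ (Real.exp_pos _).le)
    (show Measurable fun ω => Real.exp (-W ω) from hWm.neg.exp).aestronglyMeasurable]
  rfl

lemma zW_ne_zero {Ω : Type*} [MeasurableSpace Ω] {R : Measure Ω} {W : Ω → ℝ}
    (hWm : Measurable W) (hR : R ≠ 0) : zW R W ≠ 0 := by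
  intro h
  rw [zW, lintegral_eq_zero_iff (show Measurable fun ω => ENNReal.ofReal (Real.exp (-W ω)) from hWm.neg.exp.ennreal_ofReal)] at h
  have hfalse : ∀ᵐ ω ∂ R, False := by
    filter_upwards [h] with ω hω
    exact absurd hω (ENNReal.ofReal_pos.mpr (Real.exp_pos _)).ne'
  have h0 : R Set.univ = 0 := by simpa [ae_iff] using hfalse
  exact hR (Measure.measure_univ_eq_zero.mp h0)

lemma tiltedPM_eq_tilted {Ω : Type*} [MeasurableSpace Ω] (R : Measure Ω) (W : Ω → ℝ)
    (hWm : Measurable W) (hz0 : zW R W ≠ 0) (hzW : zW R W ≠ ⊤) :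
    tiltedPM R W = R.tilted (fun ω ↦ -W ω) := by
  have hz : ∫ ω, Real.exp (-W ω) ∂ R = (zW R W).toReal := integral_exp_negW R W hWm
  have hzpos : 0 < (zW R W).toReal := ENNReal.toReal_pos hz0 hzW
  have hfun : (fun x ↦ ENNReal.ofReal (Real.exp (-W x) / ∫ ω, Real.exp (-W ω) ∂ R))
      = (zW R W)⁻¹ • fun x ↦ ENNReal.ofReal (Real.exp (-W x)) := by
    funext x
    simp only [Pi.smul_apply, smul_eq_mul]
    rw [hz, div_eq_inv_mul, ENNReal.ofReal_mul (inv_nonneg.mpr hzpos.le),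
      ENNReal.ofReal_inv_of_pos hzpos, ENNReal.ofReal_toReal hzW]
  rw [tiltedPM, Measure.tilted, hfun, withDensity_smul _ (show Measurable fun ω => ENNReal.ofReal (Real.exp (-W ω)) from hWm.neg.exp.ennreal_ofReal)]

lemma tiltedPM_absolutelyContinuous {Ω : Type*} [MeasurableSpace Ω] (R : Measure Ω) (W : Ω → ℝ) :
    tiltedPM R W ≪ R :=
  Measure.AbsolutelyContinuous.trans Measure.smul_absolutelyContinuous
    (withDensity_absolutelyContinuous _ _)

/-- Coherence of the definition of relative entropy with respect to an unbounded measure: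
the value `H(P|R_W) - ∫ W dP - log z_W` does not depend on the choice of the tilting
function `W`. -/
theorem relEntSF_coherent
    {Ω : Type*} [MeasurableSpace Ω] (R : Measure Ω) [SigmaFinite R]
    (P : Measure Ω) [IsProbabilityMeasure P]
    (W W' : Ω → ℝ) (hWm : Measurable W) (hW'm : Measurable W')
    (hW0 : ∀ ω, 0 ≤ W ω) (hW'0 : ∀ ω, 0 ≤ W' ω)
    (hzW : zW R W ≠ ⊤) (hzW' : zW R W' ≠ ⊤)
    (hWP : Integrable W P) (hW'P : Integrable W' P) :
    relEntSF R W P = relEntSF R W' P := by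
  by_cases hPR : P ≪ R
  · -- main case
    have hR : R ≠ 0 := by
      rintro rfl
      have : P = 0 := by
        ext s hs
        exact hPR (by simp)
      exact (IsProbabilityMeasure.ne_zero P) this
    have hz0 : zW R W ≠ 0 := zW_ne_zero hWm hR
    have hz0' : zW R W' ≠ 0 := zW_ne_zero hW'm hR
    have hint : Integrable (fun ω ↦ Real.exp (-W ω)) R := integrable_exp_negW R W hWm hzW
    have hint' : Integrable (fun ω ↦ Real.exp (-W' ω)) R := integrable_exp_negW R W' hW'm hzW'
    have hSeq : tiltedPM R W = R.tilted (fun ω ↦ -W ω) := tiltedPM_eq_tilted R W hWm hz0 hzW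
    have hSeq' : tiltedPM R W' = R.tilted (fun ω ↦ -W' ω) := tiltedPM_eq_tilted R W' hW'm hz0' hzW'
    set S := R.tilted (fun ω ↦ -W ω) with hS
    set S' := R.tilted (fun ω ↦ -W' ω) with hS'
    have hPS : P ≪ S := hPR.trans (absolutelyContinuous_tilted hint)
    have hPS' : P ≪ S' := hPR.trans (absolutelyContinuous_tilted hint')
    set c : ℝ := Real.log (∫ ω, Real.exp (-W ω) ∂ R) with hc
    set c' : ℝ := Real.log (∫ ω, Real.exp (-W' ω) ∂ R) with hc'
    have h : llr P S =ᵐ[P] fun x ↦ -(-W x) + c + llr P R x := llr_tilted_right hPR hint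
    have h' : llr P S' =ᵐ[P] fun x ↦ -(-W' x) + c' + llr P R x := llr_tilted_right hPR hint'
    have key : llr P S' =ᵐ[P] fun x ↦ llr P S x + ((W' x - W x) + (c' - c)) := by
      filter_upwards [h, h'] with x hx hx'
      rw [hx, hx']
      ring
    have key' : llr P S =ᵐ[P] fun x ↦ llr P S' x + ((W x - W' x) + (c - c')) := by
      filter_upwards [h, h'] with x hx hx'
      rw [hx, hx']
      ring
    have hgint : Integrable (fun x ↦ (W' x - W x) + (c' - c)) P :=
      (hW'P.sub hWP).add (integrable_const _)
    have hgint' : Integrable (fun x ↦ (W x - W' x) + (c - c')) P :=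
      (hWP.sub hW'P).add (integrable_const _)
    by_cases hI : Integrable (llr P S) P
    · have hI' : Integrable (llr P S') P :=
        (integrable_congr key).mpr (hI.add hgint)
      have hInt : ∫ x, llr P S' x ∂P = ∫ x, llr P S x ∂P + ((∫ x, W' x ∂P - ∫ x, W x ∂P) + (c' - c)) := by
        rw [integral_congr_ae key, integral_add hI hgint]
        congr 1
        rw [integral_add (f := fun x ↦ W' x - W x) (hW'P.sub hWP) (integrable_const _),
          integral_sub hW'P hWP]
        simp [measure_univ]
      have hczW : c = Real.log (zW R W).toReal := by rw [hc, integral_exp_negW R W hWm]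
      have hczW' : c' = Real.log (zW R W').toReal := by rw [hc', integral_exp_negW R W' hW'm]
      rw [relEntSF, relEntSF, hSeq, hSeq', relEnt, relEnt, if_pos ⟨hPS, hI⟩, if_pos ⟨hPS', hI'⟩,
        ← hczW, ← hczW']
      rw [← EReal.coe_sub, ← EReal.coe_sub, ← EReal.coe_sub, ← EReal.coe_sub]
      norm_cast
      rw [hInt]
      ring
    · have hI' : ¬ Integrable (llr P S') P := by
        intro hI'
        exact hI ((integrable_congr key').mpr (hI'.add hgint'))
      rw [relEntSF, relEntSF, hSeq, hSeq', relEnt, relEnt,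
        if_neg (fun hcon ↦ hI hcon.2), if_neg (fun hcon ↦ hI' hcon.2),
        EReal.top_sub_coe, EReal.top_sub_coe, EReal.top_sub_coe, EReal.top_sub_coe]
  · -- P is not absolutely continuous w.r.t. R, both sides are ⊤
    have hnS : ¬ P ≪ tiltedPM R W :=
      fun hcon ↦ hPR (hcon.trans (tiltedPM_absolutelyContinuous R W))
    have hnS' : ¬ P ≪ tiltedPM R W' :=
      fun hcon ↦ hPR (hcon.trans (tiltedPM_absolutelyContinuous R W'))
    rw [relEntSF, relEntSF, relEnt, relEnt, if_neg (fun hcon ↦ hnS hcon.1),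
      if_neg (fun hcon ↦ hnS' hcon.1),
      EReal.top_sub_coe, EReal.top_sub_coe, EReal.top_sub_coe, EReal.top_sub_coe]
end

section
/- Let R be a Markov measure on the path space Ω = D([0,1],X), let 0 ≤ t ≤ 1, and let α, β : Ω → [0,∞) be nonnegative measurable functions with α measurable with respect to σ(X_{[0,t]}) and β measurable with respect to σ(X_{[t,1]}). Then for R-almost every ω: if E_R(αβ | X_t)(ω) = 0 then E_R(α | X_t)(ω) = 0 or E_R(β | X_t)(ω) = 0; and if E_R(αβ | X_t)(ω) > 0 then E_R(α | X_t)(ω) > 0, E_R(β | X_t)(ω) > 0 and E_R(αβ | X_t)(ω) = E_R(α | X_t)(ω)·E_R(β | X_t)(ω) ∈ (0,∞]. -/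
open MeasureTheory Set

/-- A càdlàg path on `[0,1]`: right-continuous with left limits. -/
def IsCadlag {X : Type*} [TopologicalSpace X] (f : Icc (0:ℝ) 1 → X) : Prop :=
  ∀ t : Icc (0:ℝ) 1, ContinuousWithinAt f (Ici t) t ∧
    ∃ l : X, Filter.Tendsto f (nhdsWithin t (Iio t)) (nhds l)

/-- The path space `D([0,1], X)` of càdlàg paths with values in `X`. -/
def PathSpace (X : Type*) [TopologicalSpace X] : Type _ :=
  {f : Icc (0:ℝ) 1 → X // IsCadlag f}

/-- The canonical process `X_t(ω) = ω_t`. -/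
def canon {X : Type*} [TopologicalSpace X] (t : Icc (0:ℝ) 1) : PathSpace X → X :=
  fun ω => ω.1 t

/-- The σ-field on path space is generated by the canonical process. -/
instance pathSpaceMeasurableSpace (X : Type*) [TopologicalSpace X] [MeasurableSpace X] :
    MeasurableSpace (PathSpace X) :=
  ⨆ t : Icc (0:ℝ) 1, MeasurableSpace.comap (canon t) inferInstance

variable {X : Type*} [TopologicalSpace X] [MeasurableSpace X]

/-- The σ-field `σ(X_t)` generated by the position at time `t`. -/
def mAt (t : Icc (0:ℝ) 1) : MeasurableSpace (PathSpace X) :=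
  MeasurableSpace.comap (canon t) inferInstance

/-- The σ-field `σ(X_{[0,t]})` generated by the past up to time `t`. -/
def mUpTo (t : Icc (0:ℝ) 1) : MeasurableSpace (PathSpace X) :=
  ⨆ s : Icc (0:ℝ) 1, ⨆ _ : s ≤ t, MeasurableSpace.comap (canon s) inferInstance

/-- The σ-field `σ(X_{[t,1]})` generated by the future from time `t` on. -/
def mFrom (t : Icc (0:ℝ) 1) : MeasurableSpace (PathSpace X) :=
  ⨆ s : Icc (0:ℝ) 1, ⨆ _ : t ≤ s, MeasurableSpace.comap (canon s) inferInstance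

/-- The σ-field `σ(X_{[s,t]})` generated by the positions between times `s` and `t`. -/
def mBetween (s t : Icc (0:ℝ) 1) : MeasurableSpace (PathSpace X) :=
  ⨆ u : Icc (0:ℝ) 1, ⨆ _ : s ≤ u ∧ u ≤ t, MeasurableSpace.comap (canon u) inferInstance

/-- `C` is (a version of) the conditional expectation, in `[0,∞]`, of the nonnegative
function `Z` given the sub-σ-field `m`, under the (possibly unbounded) measure `R`:
`C` is `m`-measurable and has the same integral as `Z` on every `m`-measurable set.
For a conditionable path measure this characterizes, up to a.e. equality, the monotone
extension `E_R(Z|m) = lim_n E_R(1_{Ω_1 ∪ … ∪ Ω_n}(Z ∧ n)|m)` of the usual conditional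
expectation along a σ-finite partition `(Ω_k)` of `R`. -/
def IsCondExpNN {Ω : Type*} [MeasurableSpace Ω] (R : Measure Ω) (m : MeasurableSpace Ω)
    (Z C : Ω → ENNReal) : Prop :=
  Measurable[m] C ∧
    ∀ s : Set Ω, MeasurableSet[m] s → ∫⁻ ω in s, C ω ∂ R = ∫⁻ ω in s, Z ω ∂ R

/-- A path measure is conditionable if all its time-marginals are σ-finite. -/
def Conditionable (Q : Measure (PathSpace X)) : Prop :=
  ∀ t : Icc (0:ℝ) 1, SigmaFinite (Q.map (canon t))

/-- A path measure `R` is Markov if it is conditionable and, for every time `t`,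
`R(X_{[t,1]} ∈ · | X_{[0,t]}) = R(X_{[t,1]} ∈ · | X_t)`, i.e. every version of the
conditional expectation given `X_t` of the indicator of a future event is also a version
of its conditional expectation given the whole past `X_{[0,t]}`. -/
def IsMarkovMeasure (R : Measure (PathSpace X)) : Prop :=
  Conditionable R ∧
    ∀ t : Icc (0:ℝ) 1, ∀ B : Set (PathSpace X), MeasurableSet[mFrom t] B →
      ∀ C : PathSpace X → ENNReal,
        IsCondExpNN R (mAt t) (B.indicator fun _ => (1 : ENNReal)) C →
        IsCondExpNN R (mUpTo t) (B.indicator fun _ => (1 : ENNReal)) C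

/-! ### Auxiliary lemmas -/

section Aux

variable {α' : Type*}

/-- Set-lintegral over a trimmed measure. -/
lemma setLIntegral_trim_eq {m m0 : MeasurableSpace α'} (hm : m ≤ m0) (μ : Measure α')
    {f : α' → ENNReal} (hf : Measurable[m] f) {S : Set α'} (hS : MeasurableSet[m] S) :
    ∫⁻ x in S, f x ∂(μ.trim hm) = ∫⁻ x in S, f x ∂μ := by
  rw [restrict_trim hm μ hS, lintegral_trim hm hf]

/-- Two `m`-measurable nonnegative functions with the same set-lintegrals on `m`-sets
agree a.e., provided the trimmed measure is σ-finite. -/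
lemma ae_eq_of_setLIntegral_eq' {m m0 : MeasurableSpace α'} (hm : m ≤ m0) (μ : Measure α')
    [SigmaFinite (μ.trim hm)] {f g : α' → ENNReal}
    (hf : Measurable[m] f) (hg : Measurable[m] g)
    (h : ∀ S, MeasurableSet[m] S → ∫⁻ x in S, f x ∂μ = ∫⁻ x in S, g x ∂μ) :
    f =ᵐ[μ] g := by
  refine ae_eq_of_ae_eq_trim (hm := hm)
    (ae_eq_of_forall_setLIntegral_eq_of_sigmaFinite (μ := μ.trim hm) hf hg fun S hS _ => ?_)
  rw [setLIntegral_trim_eq hm μ hf hS, setLIntegral_trim_eq hm μ hg hS]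
  exact h S hS

/-- A.e. inequality from set-lintegral inequalities on a sub-σ-algebra. -/
lemma ae_le_of_setLIntegral_le' {m m0 : MeasurableSpace α'} (hm : m ≤ m0) (μ : Measure α')
    [SigmaFinite (μ.trim hm)] {f g : α' → ENNReal}
    (hf : Measurable[m] f) (hg : Measurable[m] g)
    (h : ∀ S, MeasurableSet[m] S → ∫⁻ x in S, f x ∂μ ≤ ∫⁻ x in S, g x ∂μ) :
    f ≤ᵐ[μ] g := by
  refine ae_le_of_ae_le_trim (hm := hm)
    (ae_le_of_forall_setLIntegral_le_of_sigmaFinite (μ := μ.trim hm) hf fun S hS _ => ?_)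
  rw [setLIntegral_trim_eq hm μ hf hS, setLIntegral_trim_eq hm μ hg hS]
  exact h S hS

/-- The pull-out property: if `C` is a version of the conditional expectation of `Z` given
`m`, then multiplying by a nonnegative `m`-measurable `g` preserves the lintegral identity. -/
lemma lintegral_mul_condexp {m m0 : MeasurableSpace α'} (hm : m ≤ m0) (μ : Measure α')
    {Z C g : α' → ENNReal} (hZ : Measurable Z) (hC : Measurable[m] C) (hg : Measurable[m] g)
    (h : ∀ S, MeasurableSet[m] S → ∫⁻ x in S, C x ∂μ = ∫⁻ x in S, Z x ∂μ) :
    ∫⁻ x, g x * C x ∂μ = ∫⁻ x, g x * Z x ∂μ := by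
  have hC0 : Measurable C := hC.mono hm le_rfl
  have hg0 : Measurable g := hg.mono hm le_rfl
  have e1 : ∫⁻ x, g x * C x ∂μ = ∫⁻ x, g x ∂(μ.withDensity C) := by
    rw [lintegral_withDensity_eq_lintegral_mul μ hC0 hg0]
    exact lintegral_congr fun x => (mul_comm _ _)
  have e2 : ∫⁻ x, g x * Z x ∂μ = ∫⁻ x, g x ∂(μ.withDensity Z) := by
    rw [lintegral_withDensity_eq_lintegral_mul μ hZ hg0]
    exact lintegral_congr fun x => (mul_comm _ _)
  have e3 : (μ.withDensity C).trim hm = (μ.withDensity Z).trim hm := by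
    refine @Measure.ext _ m _ _ fun S hS => ?_
    rw [trim_measurableSet_eq hm hS, trim_measurableSet_eq hm hS,
      withDensity_apply _ (hm S hS), withDensity_apply _ (hm S hS)]
    exact h S hS
  rw [e1, e2, ← lintegral_trim hm hg (μ := μ.withDensity C),
    ← lintegral_trim hm hg (μ := μ.withDensity Z), e3]

end Aux

section PathAux

/-- The canonical process is measurable. -/
lemma measurable_canon (t : Icc (0:ℝ) 1) : Measurable (canon (X := X) t) :=
  measurable_iff_comap_le.mpr
    (le_iSup (fun u : Icc (0:ℝ) 1 => MeasurableSpace.comap (canon (X := X) u) inferInstance) t)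

lemma mAt_le (t : Icc (0:ℝ) 1) :
    (mAt t : MeasurableSpace (PathSpace X)) ≤ pathSpaceMeasurableSpace X :=
  le_iSup (fun u : Icc (0:ℝ) 1 => MeasurableSpace.comap (canon (X := X) u) inferInstance) t

lemma mUpTo_le (t : Icc (0:ℝ) 1) :
    (mUpTo t : MeasurableSpace (PathSpace X)) ≤ pathSpaceMeasurableSpace X :=
  iSup₂_le fun s _ =>
    le_iSup (fun u : Icc (0:ℝ) 1 => MeasurableSpace.comap (canon (X := X) u) inferInstance) s

lemma mFrom_le (t : Icc (0:ℝ) 1) :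
    (mFrom t : MeasurableSpace (PathSpace X)) ≤ pathSpaceMeasurableSpace X :=
  iSup₂_le fun s _ =>
    le_iSup (fun u : Icc (0:ℝ) 1 => MeasurableSpace.comap (canon (X := X) u) inferInstance) s

lemma mAt_le_mUpTo (t : Icc (0:ℝ) 1) :
    (mAt t : MeasurableSpace (PathSpace X)) ≤ mUpTo t :=
  le_iSup₂ (f := fun (s : Icc (0:ℝ) 1) (_ : s ≤ t) =>
    MeasurableSpace.comap (canon (X := X) s) inferInstance) t le_rfl

/-- For a conditionable measure, the trimming to `σ(X_t)` is σ-finite. -/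
lemma sigmaFinite_trim_mAt (R : Measure (PathSpace X)) (t : Icc (0:ℝ) 1)
    (h : SigmaFinite (R.map (canon t))) : SigmaFinite (R.trim (mAt_le t)) := by
  refine ⟨⟨⟨fun n => canon t ⁻¹' spanningSets (R.map (canon t)) n,
    fun _ => Set.mem_univ _, fun n => ?_, ?_⟩⟩⟩
  · rw [trim_measurableSet_eq (mAt_le t)
      ⟨spanningSets (R.map (canon t)) n, measurableSet_spanningSets _ n, rfl⟩,
      ← Measure.map_apply (measurable_canon t) (measurableSet_spanningSets _ n)]
    exact measure_spanningSets_lt_top _ n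
  · rw [← Set.preimage_iUnion, iUnion_spanningSets, Set.preimage_univ]

/-- The key consequence of the Markov property: for any nonnegative
`σ(X_{[t,1]})`-measurable `β` there exists a `σ(X_t)`-measurable version of its
conditional expectation which is also a version given the whole past `σ(X_{[0,t]})`. -/
lemma exists_version_mUpTo (R : Measure (PathSpace X)) (hR : IsMarkovMeasure R)
    (t : Icc (0:ℝ) 1) {β : PathSpace X → ENNReal} (hβ : Measurable[mFrom t] β) :
    ∃ D : PathSpace X → ENNReal, Measurable[mAt t] D ∧
      ∀ S, MeasurableSet[mUpTo t] S → ∫⁻ ω in S, D ω ∂ R = ∫⁻ ω in S, β ω ∂ R := by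
  haveI hsf : SigmaFinite (R.trim (mAt_le t)) := sigmaFinite_trim_mAt R t (hR.1 t)
  set P : (PathSpace X → ENNReal) → Prop := fun f =>
    ∃ D : PathSpace X → ENNReal, Measurable[mAt t] D ∧
      ∀ S, MeasurableSet[mUpTo t] S → ∫⁻ ω in S, D ω ∂ R = ∫⁻ ω in S, f ω ∂ R with hP
  have h_ind : ∀ (c : ENNReal) ⦃s : Set (PathSpace X)⦄, MeasurableSet[mFrom t] s →
      P (s.indicator fun _ => c) := by
    intro c s hs
    set μ := R.trim (mAt_le t) with hμdef
    set ν := (R.withDensity (s.indicator fun _ => (1:ENNReal))).trim (mAt_le t) with hνdef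
    have hind_meas : Measurable (s.indicator fun _ => (1:ENNReal)) :=
      measurable_const.indicator ((mFrom_le t) s hs)
    have hle : ν ≤ μ := by
      refine (Measure.le_iff (α := PathSpace X)).mpr fun A hA => ?_
      rw [hνdef, hμdef, trim_measurableSet_eq (mAt_le t) hA,
        trim_measurableSet_eq (mAt_le t) hA, withDensity_apply _ ((mAt_le t) A hA)]
      calc ∫⁻ ω in A, (s.indicator fun _ => (1:ENNReal)) ω ∂ R
          ≤ ∫⁻ _ in A, (1:ENNReal) ∂ R :=
            lintegral_mono fun ω => by by_cases h : ω ∈ s <;> simp [h]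
        _ = R A := by rw [setLIntegral_one]
    haveI : SigmaFinite μ := hsf
    haveI : SigmaFinite ν := Measure.sigmaFinite_of_le μ hle
    have hac : ν ≪ μ := hle.absolutelyContinuous
    set C := ν.rnDeriv μ with hCdef
    have hCmeas : Measurable[mAt t] C := Measure.measurable_rnDeriv ν μ
    have hwd : μ.withDensity C = ν := Measure.withDensity_rnDeriv_eq ν μ hac
    have hCver : ∀ S, MeasurableSet[mAt t] S →
        ∫⁻ ω in S, C ω ∂ R = ∫⁻ ω in S, (s.indicator fun _ => (1:ENNReal)) ω ∂ R := by
      intro S hS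
      rw [← setLIntegral_trim_eq (mAt_le t) R hCmeas hS, ← hμdef,
        ← withDensity_apply C hS, hwd, hνdef, trim_measurableSet_eq (mAt_le t) hS,
        withDensity_apply _ ((mAt_le t) S hS)]
    have hMarkov := hR.2 t s hs C ⟨hCmeas, hCver⟩
    refine ⟨fun ω => c * C ω, hCmeas.const_mul c, fun S hS => ?_⟩
    calc ∫⁻ ω in S, c * C ω ∂ R = c * ∫⁻ ω in S, C ω ∂ R :=
          lintegral_const_mul c (hCmeas.mono (mAt_le t) le_rfl)
      _ = c * ∫⁻ ω in S, (s.indicator fun _ => (1:ENNReal)) ω ∂ R := by rw [hMarkov.2 S hS]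
      _ = ∫⁻ ω in S, c * (s.indicator fun _ => (1:ENNReal)) ω ∂ R :=
          (lintegral_const_mul c hind_meas).symm
      _ = ∫⁻ ω in S, s.indicator (fun _ => c) ω ∂ R :=
          lintegral_congr fun ω => by by_cases h : ω ∈ s <;> simp [h]
  have h_add : ∀ ⦃f g : PathSpace X → ENNReal⦄,
      Disjoint (Function.support f) (Function.support g) →
      Measurable[mFrom t] f → Measurable[mFrom t] g → P f → P g → P (f + g) := by
    rintro f g _ hf hg ⟨Df, hDf, hDf'⟩ ⟨Dg, hDg, hDg'⟩
    refine ⟨Df + Dg, hDf.add hDg, fun S hS => ?_⟩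
    simp only [Pi.add_apply]
    rw [lintegral_add_left (hDf.mono (mAt_le t) le_rfl),
      lintegral_add_left (hf.mono (mFrom_le t) le_rfl), hDf' S hS, hDg' S hS]
  have h_sup : ∀ ⦃f : ℕ → PathSpace X → ENNReal⦄, (∀ n, Measurable[mFrom t] (f n)) →
      Monotone f → (∀ n, P (f n)) → P (fun ω => ⨆ n, f n ω) := by
    intro f hfm hfmono hPf
    choose D hDmeas hDver using hPf
    have hDle : ∀ k n, k ≤ n → D k ≤ᵐ[R] D n := by
      intro k n hkn
      refine ae_le_of_setLIntegral_le' (mAt_le t) R (hDmeas k) (hDmeas n) fun S hS => ?_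
      rw [hDver k S ((mAt_le_mUpTo t) S hS), hDver n S ((mAt_le_mUpTo t) S hS)]
      exact lintegral_mono fun ω => hfmono hkn ω
    set E : ℕ → PathSpace X → ENNReal := fun n ω => ⨆ k, ⨆ _ : k ≤ n, D k ω with hE
    have hEmeas : ∀ n, Measurable[mAt t] (E n) := fun n =>
      Measurable.iSup fun k => Measurable.iSup fun _ => hDmeas k
    have hEmono : Monotone E := fun a b hab ω =>
      iSup₂_le fun k hk => le_iSup₂ (f := fun k (_ : k ≤ b) => D k ω) k (hk.trans hab)
    have hEeq : ∀ n, E n =ᵐ[R] D n := by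
      intro n
      have h1 : ∀ᵐ ω ∂ R, ∀ k, k ≤ n → D k ω ≤ D n ω := by
        rw [ae_all_iff]
        intro k
        by_cases hk : k ≤ n
        · filter_upwards [hDle k n hk] with ω h _ using h
        · filter_upwards with ω h using absurd h hk
      filter_upwards [h1] with ω h
      exact le_antisymm (iSup₂_le fun k hk => h k hk)
        (le_iSup₂ (f := fun k (_ : k ≤ n) => D k ω) n le_rfl)
    refine ⟨fun ω => ⨆ n, E n ω, Measurable.iSup hEmeas, fun S hS => ?_⟩
    rw [lintegral_iSup (fun n => (hEmeas n).mono (mAt_le t) le_rfl)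
      (fun a b hab ω => hEmono hab ω)]
    calc ⨆ n, ∫⁻ ω in S, E n ω ∂ R = ⨆ n, ∫⁻ ω in S, f n ω ∂ R := by
          refine iSup_congr fun n => ?_
          rw [lintegral_congr_ae (ae_restrict_of_ae (hEeq n))]
          exact hDver n S hS
      _ = ∫⁻ ω in S, ⨆ n, f n ω ∂ R :=
          (lintegral_iSup (fun n => (hfm n).mono (mFrom_le t) le_rfl)
            (fun a b hab ω => hfmono hab ω)).symm
  exact @Measurable.ennreal_induction (PathSpace X) (mFrom t) P h_ind h_add h_sup β hβ

end PathAux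

/-- Lemma (Léonard, Lemma 3.1-(a)). Let `R` be a Markov measure, `α` a nonnegative
`σ(X_{[0,t]})`-measurable function and `β` a nonnegative `σ(X_{[t,1]})`-measurable
function. Then, `R`-almost everywhere: if `E_R(αβ|X_t) = 0` then `E_R(α|X_t) = 0` or
`E_R(β|X_t) = 0`; and if `E_R(αβ|X_t) > 0` then `E_R(α|X_t) > 0`, `E_R(β|X_t) > 0` and
`E_R(αβ|X_t) = E_R(α|X_t)·E_R(β|X_t) ∈ (0,∞]`. -/
theorem markov_condexp_product
    {X : Type*} [TopologicalSpace X] [MeasurableSpace X] [PolishSpace X] [BorelSpace X]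
    (R : Measure (PathSpace X)) (hR : IsMarkovMeasure R)
    (t : Icc (0:ℝ) 1) (α β : PathSpace X → ENNReal)
    (hα : Measurable[mUpTo t] α) (hβ : Measurable[mFrom t] β)
    (hαfin : ∀ ω, α ω ≠ ⊤) (hβfin : ∀ ω, β ω ≠ ⊤)
    (Cαβ Cα Cβ : PathSpace X → ENNReal)
    (hαβ : IsCondExpNN R (mAt t) (fun ω => α ω * β ω) Cαβ)
    (hCα : IsCondExpNN R (mAt t) α Cα) (hCβ : IsCondExpNN R (mAt t) β Cβ) :
    ∀ᵐ ω ∂ R,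
      (Cαβ ω = 0 → Cα ω = 0 ∨ Cβ ω = 0) ∧
      (0 < Cαβ ω → 0 < Cα ω ∧ 0 < Cβ ω ∧ Cαβ ω = Cα ω * Cβ ω) := by
  haveI hsf : SigmaFinite (R.trim (mAt_le t)) := sigmaFinite_trim_mAt R t (hR.1 t)
  obtain ⟨D, hDmeas, hDver⟩ := exists_version_mUpTo R hR t hβ
  -- `Cβ` agrees a.e. with `D`, hence is itself a version given the whole past.
  have hCβD : Cβ =ᵐ[R] D := by
    refine ae_eq_of_setLIntegral_eq' (mAt_le t) R hCβ.1 hDmeas fun S hS => ?_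
    rw [hCβ.2 S hS, hDver S ((mAt_le_mUpTo t) S hS)]
  have hCβver : ∀ S, MeasurableSet[mUpTo t] S →
      ∫⁻ ω in S, Cβ ω ∂ R = ∫⁻ ω in S, β ω ∂ R := by
    intro S hS
    rw [lintegral_congr_ae (ae_restrict_of_ae hCβD)]
    exact hDver S hS
  -- key identity: on every `σ(X_t)`-measurable set, `Cα * Cβ` and `Cαβ` have equal integrals
  have key : ∀ S, MeasurableSet[mAt t] S →
      ∫⁻ ω in S, Cα ω * Cβ ω ∂ R = ∫⁻ ω in S, Cαβ ω ∂ R := by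
    intro S hS
    have hSm0 : MeasurableSet S := (mAt_le t) S hS
    have hind : Measurable[mAt t] (S.indicator fun _ => (1:ENNReal)) :=
      measurable_const.indicator hS
    have hindU : Measurable[mUpTo t] (S.indicator fun _ => (1:ENNReal)) :=
      measurable_const.indicator ((mAt_le_mUpTo t) S hS)
    have e1 : ∫⁻ ω, (S.indicator (fun _ => (1:ENNReal)) ω * Cβ ω) * Cα ω ∂ R
        = ∫⁻ ω, (S.indicator (fun _ => (1:ENNReal)) ω * Cβ ω) * α ω ∂ R :=
      lintegral_mul_condexp (mAt_le t) R (hα.mono (mUpTo_le t) le_rfl) hCα.1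
        (hind.mul hCβ.1) hCα.2
    have e2 : ∫⁻ ω, (S.indicator (fun _ => (1:ENNReal)) ω * α ω) * Cβ ω ∂ R
        = ∫⁻ ω, (S.indicator (fun _ => (1:ENNReal)) ω * α ω) * β ω ∂ R :=
      lintegral_mul_condexp (mUpTo_le t) R (hβ.mono (mFrom_le t) le_rfl)
        (hCβ.1.mono (mAt_le_mUpTo t) le_rfl) (hindU.mul hα) hCβver
    calc ∫⁻ ω in S, Cα ω * Cβ ω ∂ R
        = ∫⁻ ω, (S.indicator (fun _ => (1:ENNReal)) ω * Cβ ω) * Cα ω ∂ R := by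
          rw [← lintegral_indicator hSm0]
          exact lintegral_congr fun ω => by by_cases h : ω ∈ S <;> simp [h] <;> ring
      _ = ∫⁻ ω, (S.indicator (fun _ => (1:ENNReal)) ω * Cβ ω) * α ω ∂ R := e1
      _ = ∫⁻ ω, (S.indicator (fun _ => (1:ENNReal)) ω * α ω) * Cβ ω ∂ R :=
          lintegral_congr fun ω => by ring
      _ = ∫⁻ ω, (S.indicator (fun _ => (1:ENNReal)) ω * α ω) * β ω ∂ R := e2
      _ = ∫⁻ ω in S, α ω * β ω ∂ R := by
          rw [← lintegral_indicator hSm0]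
          exact lintegral_congr fun ω => by by_cases h : ω ∈ S <;> simp [h] <;> ring
      _ = ∫⁻ ω in S, Cαβ ω ∂ R := (hαβ.2 S hS).symm
  have hfinal : Cαβ =ᵐ[R] fun ω => Cα ω * Cβ ω :=
    ae_eq_of_setLIntegral_eq' (mAt_le t) R hαβ.1 (hCα.1.mul hCβ.1)
      fun S hS => (key S hS).symm
  filter_upwards [hfinal] with ω hω
  constructor
  · intro h0
    exact mul_eq_zero.mp (hω ▸ h0)
  · intro hpos
    rw [hω] at hpos
    rcases CanonicallyOrderedAdd.mul_pos.mp hpos with ⟨h1, h2⟩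
    exact ⟨h1, h2, hω⟩
end

section
/- Let R, P be nonnegative measures on Ω with P bounded and P ≺ R, and let φ : Ω → X be a measurable map with R_φ = φ_*R σ-finite. Then: (1) P_φ ≺ R_φ and (dP_φ/dR_φ)(φ(ω)) = E_R(dP/dR | φ)(ω) for R-almost every ω; (2) for every bounded measurable f, E_P(f | φ)·E_R(dP/dR | φ) = E_R((dP/dR)·f | φ) R-almost everywhere; (3) E_R(dP/dR | φ) > 0 P-almost everywhere. -/
open MeasureTheory

/-- Proposition (Léonard, Prop A.12). Let `P` be a bounded measure with `P ≺ R`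
(density `θ = dP/dR`) and `φ : Ω → X` measurable with `R_φ` σ-finite. Then:
(1) `P_φ ≺ R_φ` and `(dP_φ/dR_φ) ∘ φ = E_R(dP/dR | φ)` R-a.e.;
(2) for every bounded measurable `f`,
`E_P(f|φ)·E_R(dP/dR|φ) = E_R((dP/dR)·f | φ)` R-a.e.;
(3) `E_R(dP/dR | φ) > 0` P-a.e. -/
theorem pushforward_density_condexp_of_finite
    {Ω X : Type*} [MeasurableSpace Ω] [MeasurableSpace X]
    (R P : Measure Ω) [IsFiniteMeasure P] (φ : Ω → X) (hφ : Measurable φ)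
    [SigmaFinite (R.map φ)]
    (θ : Ω → ENNReal) (hθm : Measurable θ) (hθfin : ∀ ω, θ ω ≠ ⊤)
    (hθ : ∀ f : Ω → ENNReal, Measurable f → ∫⁻ ω, f ω ∂P = ∫⁻ ω, f ω * θ ω ∂ R) :
    (∃ θφ : X → ENNReal, Measurable θφ ∧ (∀ x, θφ x ≠ ⊤) ∧
      (∀ g : X → ENNReal, Measurable g →
        ∫⁻ x, g x ∂(P.map φ) = ∫⁻ x, g x * θφ x ∂(R.map φ)) ∧
      (fun ω => (θφ (φ ω)).toReal)
        =ᵐ[R] R[fun ω => (θ ω).toReal | MeasurableSpace.comap φ inferInstance]) ∧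
    (∀ f : Ω → ℝ, Measurable f → (∃ C : ℝ, ∀ ω, |f ω| ≤ C) →
      (fun ω => (P[f | MeasurableSpace.comap φ inferInstance]) ω *
          (R[fun ω' => (θ ω').toReal | MeasurableSpace.comap φ inferInstance]) ω)
        =ᵐ[R] R[fun ω' => (θ ω').toReal * f ω' | MeasurableSpace.comap φ inferInstance]) ∧
    (∀ᵐ ω ∂P,
      0 < (R[fun ω' => (θ ω').toReal | MeasurableSpace.comap φ inferInstance]) ω) := by
  classical
  have hm : MeasurableSpace.comap φ inferInstance ≤ ‹MeasurableSpace Ω› := hφ.comap_le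
  -- P is R.withDensity θ
  have hP : P = R.withDensity θ := by
    ext s hs
    rw [withDensity_apply _ hs, ← lintegral_indicator_one hs,
      hθ (s.indicator 1) (measurable_one.indicator hs), ← lintegral_indicator hs θ]
    exact lintegral_congr fun ω => by
      by_cases h : ω ∈ s <;> simp [Set.indicator_apply, h]
  -- sigma-finiteness of trims
  haveI trimR : SigmaFinite (R.trim hm) := by
    refine ⟨⟨⟨fun n => φ ⁻¹' (spanningSets (R.map φ) n), fun _ => trivial, fun n => ?_, ?_⟩⟩⟩
    · rw [trim_measurableSet_eq hm ⟨_, measurableSet_spanningSets _ n, rfl⟩,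
        ← Measure.map_apply hφ (measurableSet_spanningSets _ n)]
      exact measure_spanningSets_lt_top _ n
    · rw [← Set.preimage_iUnion, iUnion_spanningSets, Set.preimage_univ]
  haveI : IsFiniteMeasure (P.trim hm) :=
    ⟨by rw [trim_measurableSet_eq hm MeasurableSet.univ]; exact measure_lt_top P _⟩
  -- integrability of θ.toReal
  have hθtop : ∫⁻ ω, θ ω ∂ R ≠ ⊤ := by
    have h1 := hθ 1 measurable_one
    simp only [Pi.one_apply, one_mul, lintegral_one] at h1
    rw [← h1]; exact measure_ne_top P _
  have hθR_int : Integrable (fun ω => (θ ω).toReal) R :=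
    integrable_toReal_of_lintegral_ne_top hθm.aemeasurable hθtop
  have hPset : ∀ s : Set Ω, MeasurableSet s → P s = ∫⁻ ω in s, θ ω ∂ R := fun s hs => by
    rw [hP, withDensity_apply _ hs]
  -- real set integrals with respect to P
  have hwmeas : Measurable fun ω => (θ ω).toNNReal := hθm.ennreal_toNNReal
  have hPw : P = R.withDensity fun ω => ((θ ω).toNNReal : ENNReal) := by
    rw [hP]
    exact withDensity_congr_ae
      (Filter.Eventually.of_forall fun ω => (ENNReal.coe_toNNReal (hθfin ω)).symm)
  have hsetint : ∀ (k : Ω → ℝ) (s : Set Ω), MeasurableSet s →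
      ∫ x in s, k x ∂P = ∫ x in s, (θ x).toReal * k x ∂ R := by
    intro k s hs
    rw [hPw, setIntegral_withDensity_eq_setIntegral_smul hwmeas k hs]
    exact integral_congr_ae (Filter.Eventually.of_forall fun ω => by
      simp [NNReal.smul_def, ENNReal.toReal])
  -- Part 1 construction
  have hac : P.map φ ≪ R.map φ := by
    rw [hP]; exact (withDensity_absolutelyContinuous R θ).map hφ
  haveI : IsFiniteMeasure (P.map φ) := Measure.isFiniteMeasure_map P φ
  set d : X → ENNReal := (P.map φ).rnDeriv (R.map φ) with hd_def
  have hdm : Measurable d := Measure.measurable_rnDeriv _ _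
  set θφ : X → ENNReal := fun x => if d x = ⊤ then 0 else d x with hθφ_def
  have hθφm : Measurable θφ :=
    Measurable.ite (hdm (measurableSet_singleton ⊤)) measurable_const hdm
  have hθφfin : ∀ x, θφ x ≠ ⊤ := fun x => by
    by_cases h : d x = ⊤ <;> simp [hθφ_def, h]
  have hθφae : θφ =ᵐ[R.map φ] d := by
    filter_upwards [Measure.rnDeriv_lt_top (P.map φ) (R.map φ)] with x hx
    simp [hθφ_def, hd_def, hx.ne]
  have hwd : (R.map φ).withDensity θφ = P.map φ := by
    rw [withDensity_congr_ae hθφae]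
    exact Measure.withDensity_rnDeriv_eq _ _ hac
  have hlin : ∀ g : X → ENNReal, Measurable g →
      ∫⁻ x, g x ∂(P.map φ) = ∫⁻ x, g x * θφ x ∂(R.map φ) := by
    intro g hg
    rw [← hwd, lintegral_withDensity_eq_lintegral_mul _ hθφm hg]
    exact lintegral_congr fun x => mul_comm _ _
  have hPmapset : ∀ t : Set X, MeasurableSet t →
      ∫⁻ ω in φ ⁻¹' t, θφ (φ ω) ∂ R = P (φ ⁻¹' t) := by
    intro t ht
    rw [← setLIntegral_map ht hθφm hφ, ← withDensity_apply _ ht, hwd, Measure.map_apply hφ ht]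
  have hcint : Integrable (fun ω => (θφ (φ ω)).toReal) R := by
    refine integrable_toReal_of_lintegral_ne_top (hθφm.comp hφ).aemeasurable ?_
    have h0 := hPmapset Set.univ MeasurableSet.univ
    simp only [Set.preimage_univ, Measure.restrict_univ] at h0
    rw [h0]; exact measure_ne_top P _
  have hcondθφ : (fun ω => (θφ (φ ω)).toReal) =ᵐ[R] R[fun ω => (θ ω).toReal | MeasurableSpace.comap φ inferInstance] := by
    refine ae_eq_condExp_of_forall_setIntegral_eq hm hθR_int
      (fun s _ _ => hcint.integrableOn) ?_ ?_
    · rintro s ⟨t, ht, rfl⟩ -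
      have hAE : AEMeasurable (fun ω => θφ (φ ω)) (R.restrict (φ ⁻¹' t)) :=
        (hθφm.comp hφ).aemeasurable.restrict
      rw [integral_toReal hAE
            (Filter.Eventually.of_forall fun ω => lt_top_iff_ne_top.2 (hθφfin _)),
          integral_toReal (hθm.aemeasurable.restrict)
            (Filter.Eventually.of_forall fun ω => lt_top_iff_ne_top.2 (hθfin _)),
          hPmapset t ht, ← hPset _ (hφ ht)]
    · exact StronglyMeasurable.aestronglyMeasurable (((ENNReal.measurable_toReal.comp hθφm).comp
        (Measurable.of_comap_le le_rfl)).stronglyMeasurable)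
  refine ⟨⟨θφ, hθφm, hθφfin, hlin, hcondθφ⟩, ?_, ?_⟩
  · -- Part 2
    rintro f hf ⟨C, hC⟩
    set g := P[f | MeasurableSpace.comap φ inferInstance] with hgdef
    set h2 := R[fun ω' => (θ ω').toReal | MeasurableSpace.comap φ inferInstance] with hh2def
    have hfPint : Integrable f P := by
      refine Integrable.mono' (integrable_const C) hf.aestronglyMeasurable
        (Filter.Eventually.of_forall fun ω => ?_)
      rw [Real.norm_eq_abs]; exact hC ω
    have hgSM : StronglyMeasurable[MeasurableSpace.comap φ inferInstance] g := stronglyMeasurable_condExp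
    have hgmeas : Measurable g := hgSM.measurable.mono hm le_rfl
    have hgbdd : ∀ᵐ ω ∂P, |g ω| ≤ (C.toNNReal : ℝ) :=
      ae_bdd_condExp_of_ae_bdd
        (Filter.Eventually.of_forall fun ω => (hC ω).trans (Real.le_coe_toNNReal C))
    set N := {ω | ¬ |g ω| ≤ (C.toNNReal : ℝ)} with hNdef
    have hNmeas : MeasurableSet N := (measurableSet_le hgmeas.abs measurable_const).compl
    have hPN : P N = 0 := ae_iff.mp hgbdd
    have hθN : ∀ᵐ ω ∂ R, ω ∈ N → θ ω = 0 := by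
      have h0 : ∫⁻ ω in N, θ ω ∂ R = 0 := by rw [← hPset N hNmeas]; exact hPN
      have h1 : θ =ᵐ[R.restrict N] 0 := (lintegral_eq_zero_iff hθm).mp h0
      exact (ae_restrict_iff' hNmeas).mp h1
    have hgθint : Integrable (g * fun ω => (θ ω).toReal) R := by
      refine Integrable.mono' (hθR_int.const_mul (C.toNNReal : ℝ))
        ((hgmeas.mul hθm.ennreal_toReal).aestronglyMeasurable) ?_
      filter_upwards [hθN] with ω hω
      by_cases h : ω ∈ N
      · simp [hω h]
      · have hb : |g ω| ≤ (C.toNNReal : ℝ) := not_not.mp h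
        rw [Pi.mul_apply, Real.norm_eq_abs, abs_mul, abs_of_nonneg ENNReal.toReal_nonneg]
        exact mul_le_mul_of_nonneg_right hb ENNReal.toReal_nonneg
    have hpull : R[(g * fun ω => (θ ω).toReal) | MeasurableSpace.comap φ inferInstance] =ᵐ[R] g * h2 :=
      condExp_mul_of_stronglyMeasurable_left hgSM hgθint hθR_int
    have hθf_int : Integrable (fun ω => (θ ω).toReal * f ω) R := by
      refine Integrable.mono' (hθR_int.mul_const C)
        ((hθm.ennreal_toReal.mul hf).aestronglyMeasurable)
        (Filter.Eventually.of_forall fun ω => ?_)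
      rw [Real.norm_eq_abs, abs_mul, abs_of_nonneg ENNReal.toReal_nonneg]
      exact mul_le_mul_of_nonneg_left (hC ω) ENNReal.toReal_nonneg
    refine ae_eq_condExp_of_forall_setIntegral_eq hm hθf_int
      (fun s _ _ => ((integrable_condExp.congr hpull).congr
        (Filter.Eventually.of_forall fun ω => rfl)).integrableOn) ?_ ?_
    · rintro s ⟨t, ht, rfl⟩ -
      have hs : MeasurableSet[MeasurableSpace.comap φ inferInstance] (φ ⁻¹' t) := ⟨t, ht, rfl⟩
      have hsΩ : MeasurableSet (φ ⁻¹' t) := hφ ht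
      calc ∫ x in φ ⁻¹' t, g x * h2 x ∂ R
          = ∫ x in φ ⁻¹' t, (R[(g * fun ω => (θ ω).toReal) | MeasurableSpace.comap φ inferInstance]) x ∂ R :=
            (integral_congr_ae (ae_restrict_of_ae hpull)).symm
        _ = ∫ x in φ ⁻¹' t, g x * (θ x).toReal ∂ R := setIntegral_condExp hm hgθint hs
        _ = ∫ x in φ ⁻¹' t, (θ x).toReal * g x ∂ R := by
            exact integral_congr_ae (Filter.Eventually.of_forall fun ω => mul_comm _ _)
        _ = ∫ x in φ ⁻¹' t, g x ∂P := (hsetint g _ hsΩ).symm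
        _ = ∫ x in φ ⁻¹' t, f x ∂P := setIntegral_condExp hm hfPint hs
        _ = ∫ x in φ ⁻¹' t, (θ x).toReal * f x ∂ R := hsetint f _ hsΩ
    · exact StronglyMeasurable.aestronglyMeasurable (hgSM.mul stronglyMeasurable_condExp)
  · -- Part 3
    set h2 := R[fun ω' => (θ ω').toReal | MeasurableSpace.comap φ inferInstance] with hh2def
    have hhSM : StronglyMeasurable[MeasurableSpace.comap φ inferInstance] h2 := stronglyMeasurable_condExp
    have hhmeas : Measurable h2 := hhSM.measurable.mono hm le_rfl
    set N := {ω | h2 ω ≤ 0} with hNdef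
    have hNmeas : MeasurableSet N := measurableSet_le hhmeas measurable_const
    have hNm : MeasurableSet[MeasurableSpace.comap φ inferInstance] N := measurableSet_le hhSM.measurable measurable_const
    have h1 : ∫ ω in N, h2 ω ∂ R = ∫ ω in N, (θ ω).toReal ∂ R :=
      setIntegral_condExp hm hθR_int hNm
    have h3 : ∫ ω in N, (θ ω).toReal ∂ R = 0 := by
      refine le_antisymm ?_ (setIntegral_nonneg hNmeas fun ω _ => ENNReal.toReal_nonneg)
      rw [← h1]
      exact setIntegral_nonpos hNmeas (fun ω hω => hω)
    have h4 : (fun ω => (θ ω).toReal) =ᵐ[R.restrict N] 0 := by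
      rw [← integral_eq_zero_iff_of_nonneg (fun ω => ENNReal.toReal_nonneg)
        hθR_int.restrict]
      exact h3
    have h5 : P N = 0 := by
      rw [hPset N hNmeas]
      calc ∫⁻ ω in N, θ ω ∂ R = ∫⁻ _ in N, 0 ∂ R := by
            refine lintegral_congr_ae (h4.mono fun ω hω => ?_)
            have : (θ ω).toReal = 0 := hω
            simpa [ENNReal.toReal_eq_zero_iff, hθfin ω] using this
        _ = 0 := lintegral_zero
    refine ae_iff.2 ?_
    have hEq : {ω | ¬ 0 < h2 ω} = N := by ext ω; simp [hNdef, not_lt]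
    rwa [hEq]
end
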